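/- Let g be a real symmetric n×n matrix satisfying g ≤ c·I for a constant c > 0 (i.e., c·I − g is positive semidefinite) and g positive definite, and let H be symmetric positive semidefinite. If f is a symmetric function on Γₙ⁺ ∪ ∂Γₙ⁺, monotone in each variable (f_i ≥ 0) and F(A) = f(λ(A)), then F(H^{1/2} g^{-1} H^{1/2}) ≥ F((1/c) H). -/

import Mathlib

open Matrix
namespace Matrix.PosSemidef
noncomputable def sqrt {n : Type*} [Fintype n] [DecidableEq n] {𝕜 : Type*} [RCLike 𝕜]
    [PartialOrder 𝕜] [StarOrderedRing 𝕜]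
    {A : Matrix n n 𝕜} (hA : A.PosSemidef) : Matrix n n 𝕜 :=
  hA.1.eigenvectorUnitary.1 * diagonal ((↑) ∘ Real.sqrt ∘ hA.1.eigenvalues) *
  (star hA.1.eigenvectorUnitary : Matrix n n 𝕜)
end Matrix.PosSemidef

namespace Matrix.PosSemidef

lemma sqrt_mul_self {n : ℕ} {A : Matrix (Fin n) (Fin n) ℝ} (hA : A.PosSemidef) :
    hA.sqrt * hA.sqrt = A := by
  have key : ∀ (U : unitaryGroup (Fin n) ℝ) (d e : Fin n → ℝ), d * d = e →
      (U : Matrix (Fin n) (Fin n) ℝ) * diagonal d * (star U : Matrix (Fin n) (Fin n) ℝ) *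
        ((U : Matrix (Fin n) (Fin n) ℝ) * diagonal d * (star U : Matrix (Fin n) (Fin n) ℝ))
        = (U : Matrix (Fin n) (Fin n) ℝ) * diagonal e * (star U : Matrix (Fin n) (Fin n) ℝ) := by
    intro U d e hde
    have hUU : (star U : Matrix (Fin n) (Fin n) ℝ) * (U : Matrix (Fin n) (Fin n) ℝ) = 1 :=
      Unitary.coe_star_mul_self U
    calc (U : Matrix (Fin n) (Fin n) ℝ) * diagonal d * (star U : Matrix (Fin n) (Fin n) ℝ) *
        ((U : Matrix (Fin n) (Fin n) ℝ) * diagonal d * (star U : Matrix (Fin n) (Fin n) ℝ))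
        = (U : Matrix (Fin n) (Fin n) ℝ) * diagonal d * ((star U : Matrix (Fin n) (Fin n) ℝ) *
          (U : Matrix (Fin n) (Fin n) ℝ)) * diagonal d * (star U : Matrix (Fin n) (Fin n) ℝ) := by
          simp only [Matrix.mul_assoc]
      _ = _ := by
          rw [hUU, Matrix.mul_one, Matrix.mul_assoc (U : Matrix (Fin n) (Fin n) ℝ),
            diagonal_mul_diagonal', ← hde, Pi.mul_def]
  conv_rhs => rw [hA.1.spectral_theorem]
  simp only [sqrt, Unitary.conjStarAlgAut_apply]
  refine key _ _ _ ?_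
  funext i
  simp [Real.mul_self_sqrt (hA.eigenvalues_nonneg i)]

lemma posSemidef_sqrt {n : ℕ} {A : Matrix (Fin n) (Fin n) ℝ} (hA : A.PosSemidef) :
    hA.sqrt.PosSemidef := by
  rw [sqrt, star_eq_conjTranspose]
  exact PosSemidef.mul_mul_conjTranspose_same (PosSemidef.diagonal fun i => by
    simp [Real.sqrt_nonneg]) _

end Matrix.PosSemidef


open Matrix Finset
open scoped RealInnerProductSpace

noncomputable section

namespace Stmt8Aux

variable {n : ℕ}

lemma toEuclideanLin_eigen {A : Matrix (Fin n) (Fin n) ℝ} (hA : A.IsHermitian) (j : Fin n) :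
    Matrix.toEuclideanLin A (hA.eigenvectorBasis j)
      = hA.eigenvalues j • hA.eigenvectorBasis j := by
  ext i
  simp [Matrix.toEuclideanLin_apply, hA.mulVec_eigenvectorBasis j]

lemma inner_toEuclideanLin_eq_sum {A : Matrix (Fin n) (Fin n) ℝ} (hA : A.IsHermitian)
    (x : EuclideanSpace ℝ (Fin n)) :
    ⟪x, Matrix.toEuclideanLin A x⟫ =
      ∑ j, hA.eigenvalues j * (⟪hA.eigenvectorBasis j, x⟫)^2 := by
  rw [← (hA.eigenvectorBasis).sum_inner_mul_inner x (Matrix.toEuclideanLin A x)]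
  refine Finset.sum_congr rfl fun j _ => ?_
  have hsym : (Matrix.toEuclideanLin A).IsSymmetric :=
    Matrix.isHermitian_iff_isSymmetric.1 hA
  have h1 : ⟪hA.eigenvectorBasis j, Matrix.toEuclideanLin A x⟫ =
      hA.eigenvalues j * ⟪hA.eigenvectorBasis j, x⟫ := by
    rw [← hsym, toEuclideanLin_eigen hA j, real_inner_smul_left]
  rw [h1, real_inner_comm x]
  ring

lemma inner_self_eq_sum (b : OrthonormalBasis (Fin n) ℝ (EuclideanSpace ℝ (Fin n)))
    (x : EuclideanSpace ℝ (Fin n)) :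
    ⟪x, x⟫ = ∑ j, (⟪b j, x⟫)^2 := by
  rw [← b.sum_inner_mul_inner x x]
  refine Finset.sum_congr rfl fun j _ => ?_
  rw [real_inner_comm x]
  ring

lemma inner_eq_zero_of_mem_span (b : OrthonormalBasis (Fin n) ℝ (EuclideanSpace ℝ (Fin n)))
    {s : Set (Fin n)} {x : EuclideanSpace ℝ (Fin n)}
    (hx : x ∈ Submodule.span ℝ (b '' s)) {j : Fin n} (hj : j ∉ s) :
    ⟪b j, x⟫ = 0 := by
  induction hx using Submodule.span_induction with
  | mem y hy =>
    obtain ⟨k, hk, rfl⟩ := hy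
    have : j ≠ k := fun h => hj (h ▸ hk)
    simp [orthonormal_iff_ite.1 b.orthonormal j k, this]
  | zero => simp
  | add y z _ _ hy hz => rw [inner_add_right, hy, hz, add_zero]
  | smul a y _ hy => rw [real_inner_smul_right, hy, mul_zero]

lemma inner_toEuclideanLin_nonneg {M : Matrix (Fin n) (Fin n) ℝ} (hM : M.PosSemidef)
    (x : EuclideanSpace ℝ (Fin n)) : 0 ≤ ⟪x, Matrix.toEuclideanLin M x⟫ := by
  have := hM.dotProduct_mulVec_nonneg x
  simpa [EuclideanSpace.inner_eq_star_dotProduct, Matrix.toEuclideanLin_apply, dotProduct_comm] using this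

lemma weyl_monotone {A B : Matrix (Fin n) (Fin n) ℝ} (hA : A.IsHermitian)
    (hB : B.IsHermitian) (hAB : (B - A).PosSemidef) (i : Fin n) :
    (hA.eigenvalues ∘ Tuple.sort hA.eigenvalues) i
      ≤ (hB.eigenvalues ∘ Tuple.sort hB.eigenvalues) i := by
  classical
  set σA := Tuple.sort hA.eigenvalues with hσA
  set σB := Tuple.sort hB.eigenvalues with hσB
  set vA := hA.eigenvectorBasis with hvA
  set vB := hB.eigenvectorBasis with hvB
  set SA : Submodule ℝ (EuclideanSpace ℝ (Fin n)) :=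
    Submodule.span ℝ (vA '' (σA '' Set.Ici i)) with hSA
  set SB : Submodule ℝ (EuclideanSpace ℝ (Fin n)) :=
    Submodule.span ℝ (vB '' (σB '' Set.Iic i)) with hSB
  have hi := i.isLt
  -- finrank computations
  have hrA : Module.finrank ℝ SA = n - i := by
    rw [hSA, Set.image_image, Set.image_eq_range]
    have li : LinearIndependent ℝ (fun x : (Set.Ici i) => vA (σA ↑x)) :=
      vA.orthonormal.linearIndependent.comp
        (fun j : (Set.Ici i) => σA j) (σA.injective.comp Subtype.val_injective)
    rw [finrank_span_eq_card li]
    simp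
  have hrB : Module.finrank ℝ SB = i + 1 := by
    rw [hSB, Set.image_image, Set.image_eq_range]
    have li : LinearIndependent ℝ (fun x : (Set.Iic i) => vB (σB ↑x)) :=
      vB.orthonormal.linearIndependent.comp
        (fun j : (Set.Iic i) => σB j) (σB.injective.comp Subtype.val_injective)
    rw [finrank_span_eq_card li]
    simp
  -- intersection is nonzero
  have hdim : 0 < Module.finrank ℝ ↥(SA ⊓ SB) := by
    have hsum := Submodule.finrank_sup_add_finrank_inf_eq SA SB
    have hle : Module.finrank ℝ ↥(SA ⊔ SB) ≤ n := by
      simpa using Submodule.finrank_le (SA ⊔ SB)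
    omega
  obtain ⟨⟨x, hxmem⟩, hx0⟩ := Module.finrank_pos_iff_exists_ne_zero.mp hdim
  have hxA : x ∈ SA := hxmem.1
  have hxB : x ∈ SB := hxmem.2
  have hxne : x ≠ 0 := by simpa [Submodule.coe_eq_zero] using hx0
  have hxpos : (0:ℝ) < ⟪x, x⟫ := by
    rw [real_inner_self_eq_norm_mul_norm]
    have := norm_pos_iff.mpr hxne
    exact mul_pos this this
  -- lower bound for A
  have hlow : (hA.eigenvalues ∘ σA) i * ⟪x, x⟫ ≤ ⟪x, Matrix.toEuclideanLin A x⟫ := by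
    rw [inner_toEuclideanLin_eq_sum hA, inner_self_eq_sum vA, Finset.mul_sum]
    refine Finset.sum_le_sum fun j _ => ?_
    by_cases hj : j ∈ σA '' Set.Ici i
    · obtain ⟨k, hk, rfl⟩ := hj
      have : (hA.eigenvalues ∘ σA) i ≤ hA.eigenvalues (σA k) :=
        Tuple.monotone_sort hA.eigenvalues hk
      exact mul_le_mul_of_nonneg_right this (sq_nonneg _)
    · rw [inner_eq_zero_of_mem_span vA hxA hj]
      simp
  -- upper bound for B
  have hupp : ⟪x, Matrix.toEuclideanLin B x⟫ ≤ (hB.eigenvalues ∘ σB) i * ⟪x, x⟫ := by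
    rw [inner_toEuclideanLin_eq_sum hB, inner_self_eq_sum vB, Finset.mul_sum]
    refine Finset.sum_le_sum fun j _ => ?_
    by_cases hj : j ∈ σB '' Set.Iic i
    · obtain ⟨k, hk, rfl⟩ := hj
      have : hB.eigenvalues (σB k) ≤ (hB.eigenvalues ∘ σB) i :=
        Tuple.monotone_sort hB.eigenvalues hk
      exact mul_le_mul_of_nonneg_right this (sq_nonneg _)
    · rw [inner_eq_zero_of_mem_span vB hxB hj]
      simp
  -- middle inequality
  have hmid : ⟪x, Matrix.toEuclideanLin A x⟫ ≤ ⟪x, Matrix.toEuclideanLin B x⟫ := by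
    have h := inner_toEuclideanLin_nonneg hAB x
    rw [map_sub] at h
    simp only [LinearMap.sub_apply, inner_sub_right] at h
    linarith
  have : (hA.eigenvalues ∘ σA) i * ⟪x, x⟫ ≤ (hB.eigenvalues ∘ σB) i * ⟪x, x⟫ :=
    le_trans hlow (le_trans hmid hupp)
  exact le_of_mul_le_mul_right this hxpos


lemma psd_smul {M : Matrix (Fin n) (Fin n) ℝ} (hM : M.PosSemidef) {d : ℝ} (hd : 0 ≤ d) :
    (d • M).PosSemidef := by
  constructor
  · show (d • M)ᴴ = d • M
    rw [conjTranspose_smul, hM.1]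
    congr 1
  · intro x
    exact (hM.smul hd).2 x

lemma inv_ge_smul_one {g : Matrix (Fin n) (Fin n) ℝ} {c : ℝ} (hc : 0 < c)
    (hg : g.PosDef)
    (hgc : ((c • (1 : Matrix (Fin n) (Fin n) ℝ)) - g).PosSemidef) :
    (g⁻¹ - (1/c) • (1 : Matrix (Fin n) (Fin n) ℝ)).PosSemidef := by
  classical
  have hginv : (g⁻¹).PosDef := hg.inv
  set s := hginv.posSemidef.sqrt with hs
  have hss : s * s = g⁻¹ := hginv.posSemidef.sqrt_mul_self
  have hsH : sᴴ = s := hginv.posSemidef.posSemidef_sqrt.1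
  have hgdet : IsUnit g.det := isUnit_iff_ne_zero.mpr hg.det_pos.ne'
  have hgg : g * g⁻¹ = 1 := mul_nonsing_inv g hgdet
  have hsdet : IsUnit s.det := by
    have h : s.det * s.det = (g⁻¹).det := by rw [← det_mul, hss]
    have : (g⁻¹).det ≠ 0 := hginv.det_pos.ne'
    refine isUnit_iff_ne_zero.mpr fun h0 => this ?_
    rw [← h, h0, zero_mul]
  have ht : s * g * s = 1 := by
    have htt : (s * g * s) * (s * g * s) = s * g * s := by
      calc (s * g * s) * (s * g * s) = s * g * (s * s) * g * s := by noncomm_ring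
        _ = s * (g * g⁻¹) * g * s := by rw [hss]; noncomm_ring
        _ = s * g * s := by rw [hgg]; noncomm_ring
    have htdet : IsUnit (s * g * s).det := by
      rw [det_mul, det_mul]
      exact (hsdet.mul hgdet).mul hsdet
    have := mul_nonsing_inv (s * g * s) htdet
    calc s * g * s = (s * g * s) * ((s * g * s) * (s * g * s)⁻¹) := by rw [this, mul_one]
      _ = ((s * g * s) * (s * g * s)) * (s * g * s)⁻¹ := by noncomm_ring
      _ = 1 := by rw [htt, this]
  have hconj : (s * ((c • (1 : Matrix (Fin n) (Fin n) ℝ)) - g) * sᴴ).PosSemidef :=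
    hgc.mul_mul_conjTranspose_same s
  rw [hsH] at hconj
  have heq : s * ((c • (1 : Matrix (Fin n) (Fin n) ℝ)) - g) * s
      = c • g⁻¹ - 1 := by
    calc s * ((c • (1 : Matrix (Fin n) (Fin n) ℝ)) - g) * s
        = c • (s * 1 * s) - s * g * s := by
          rw [Matrix.mul_sub, Matrix.sub_mul, Matrix.mul_smul, Matrix.smul_mul]
      _ = c • g⁻¹ - 1 := by rw [Matrix.mul_one, hss, ht]
  rw [heq] at hconj
  have : g⁻¹ - (1/c) • (1 : Matrix (Fin n) (Fin n) ℝ)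
      = (1/c) • (c • g⁻¹ - 1) := by
    rw [smul_sub, smul_smul, one_div, inv_mul_cancel₀ hc.ne', one_smul]
  rw [this]
  exact psd_smul hconj (by positivity)

end Stmt8Aux

end


open Matrix

/-- If `g ≤ c·I` is symmetric positive definite, `H` is symmetric positive semidefinite,
and `f` is a symmetric function, monotone in each variable, with `F(A) = f(λ(A))`, then
`F(H^{1/2} g^{-1} H^{1/2}) ≥ F((1/c) H)`. -/
theorem stmt_8 (n : ℕ) (c : ℝ) (hc : 0 < c)
    (g H : Matrix (Fin n) (Fin n) ℝ) (hg : g.PosDef) (hH : H.PosSemidef)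
    (hgc : ((c • (1 : Matrix (Fin n) (Fin n) ℝ)) - g).PosSemidef)
    (f : (Fin n → ℝ) → ℝ)
    (hfsymm : ∀ (σ : Equiv.Perm (Fin n)) (x : Fin n → ℝ), f (x ∘ σ) = f x)
    (hmono : ∀ x y : Fin n → ℝ, (∀ i, x i ≤ y i) → f x ≤ f y)
    (h1 : ((1 / c) • H).IsHermitian)
    (h2 : (hH.sqrt * g⁻¹ * hH.sqrt).IsHermitian) :
    f h1.eigenvalues ≤ f h2.eigenvalues := by
  have hP : (g⁻¹ - (1/c) • (1 : Matrix (Fin n) (Fin n) ℝ)).PosSemidef :=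
    Stmt8Aux.inv_ge_smul_one hc hg hgc
  have hsq : hH.sqrt * hH.sqrt = H := hH.sqrt_mul_self
  have hsH : hH.sqrtᴴ = hH.sqrt := hH.posSemidef_sqrt.1
  have hcon : (hH.sqrt * (g⁻¹ - (1/c) • (1 : Matrix (Fin n) (Fin n) ℝ)) * hH.sqrtᴴ).PosSemidef :=
    hP.mul_mul_conjTranspose_same hH.sqrt
  rw [hsH] at hcon
  have heq : hH.sqrt * (g⁻¹ - (1/c) • (1 : Matrix (Fin n) (Fin n) ℝ)) * hH.sqrt
      = (hH.sqrt * g⁻¹ * hH.sqrt) - (1/c) • H := by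
    calc hH.sqrt * (g⁻¹ - (1/c) • (1 : Matrix (Fin n) (Fin n) ℝ)) * hH.sqrt
        = hH.sqrt * g⁻¹ * hH.sqrt - (1/c) • (hH.sqrt * 1 * hH.sqrt) := by
          rw [Matrix.mul_sub, Matrix.sub_mul, Matrix.mul_smul, Matrix.smul_mul]
      _ = (hH.sqrt * g⁻¹ * hH.sqrt) - (1/c) • H := by rw [Matrix.mul_one, hsq]
  rw [heq] at hcon
  calc f h1.eigenvalues
      = f (h1.eigenvalues ∘ Tuple.sort h1.eigenvalues) := (hfsymm _ _).symm
    _ ≤ f (h2.eigenvalues ∘ Tuple.sort h2.eigenvalues) :=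
        hmono _ _ (fun i => Stmt8Aux.weyl_monotone h1 h2 hcon i)
    _ = f h2.eigenvalues := hfsymm _ _
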